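/- Decomposition of the pairing operator via the combinatorial R matrix: let u ∈ ℕ^n with min of nonzero entries > 1 and nested decomposition u = u_1 + ⋯ + u_m into 0-1 vectors with 0 < u_m ≤ ⋯ ≤ u_2 = u_1, and let Q ⊆ [n] with indicator vector 𝐐. Then Q^{(1)}(u) = 𝐐 + Σ_{i=2}^{m} (ℛ(𝐐 ⊗ u_i))_1, where ℛ is the combinatorial R matrix on pairs of 0-1 vectors (the Nakayashiki–Yamada rule: exchange cylindrically unmatched particles between the two rows under weakly-right pairing) and (·)_1 denotes the first tensor factor. -/

import Mathlib

/-- Linear bracket-matching pass.  Tokens are `(site, isOpen)`.  The second argument is the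
stack of currently unmatched open brackets (most recent first), the third accumulates the
linearly unmatched closed brackets (most recent first). -/
def pairProcess {α : Type} : List (α × Bool) → List α → List α → List α × List α
  | [], opens, closes => (opens, closes)
  | (a, true) :: ts, opens, closes => pairProcess ts (a :: opens) closes
  | (a, false) :: ts, [], closes => pairProcess ts [] (a :: closes)
  | (_, false) :: ts, _ :: opens, closes => pairProcess ts opens closes

/-- The token list of `Par(A,B)`: scanning sites `j = 1, …, n` in order, record an open
bracket for `j ∈ B` (the row above) and then a closed bracket for `j ∈ A` (the row below). -/
def parTokens {n : ℕ} (A B : Finset (Fin n)) : List (Fin n × Bool) :=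
  (List.finRange n).flatMap
    (fun j => (if j ∈ B then [(j, true)] else []) ++ (if j ∈ A then [(j, false)] else []))

/-- Result of the linear pass on `Par(A,B)`. -/
def parRes {n : ℕ} (A B : Finset (Fin n)) : List (Fin n) × List (Fin n) :=
  pairProcess (parTokens A B) [] []

/-- The set of cylindrically unpaired particles of `B` (open brackets) in `Par(A,B)`:
after the linear pass, the cyclic rule additionally matches `min` many remaining opens
and closes, leaving the earliest surplus opens unmatched. -/
def unmatchedOpen {n : ℕ} (A B : Finset (Fin n)) : Finset (Fin n) :=
  ((parRes A B).1.drop (parRes A B).2.length).toFinset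

/-- The set of cylindrically unpaired particles of `A` (closed brackets) in `Par(A,B)`. -/
def unmatchedClose {n : ℕ} (A B : Finset (Fin n)) : Finset (Fin n) :=
  ((parRes A B).2.take ((parRes A B).2.length - (parRes A B).1.length)).toFinset

/-- The row-swapping involution on a pair of rows `(A, B)` (`A` below, `B` above):
all cylindrically unmatched entries of `Par(A,B)` are exchanged between the two rows. -/
def sigmaPair {n : ℕ} (A B : Finset (Fin n)) : Finset (Fin n) × Finset (Fin n) :=
  ((A \ unmatchedClose A B) ∪ unmatchedOpen A B,
   (A \ unmatchedClose A B) ∪ unmatchedOpen A B)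

/-- The involution `σ_i` acting on rows `i` and `i+1` of a multiline queue. -/
def sigmaRow {n : ℕ} (i : ℕ) (Q : ℕ → Finset (Fin n)) : ℕ → Finset (Fin n) :=
  fun j =>
    if j = i then (sigmaPair (Q i) (Q (i + 1))).1
    else if j = i + 1 then (sigmaPair (Q i) (Q (i + 1))).2
    else Q j

/-- `u^{(r)}`: the set of sites carrying a particle with label at least `r`. -/
def levelSet {n : ℕ} (u : Fin n → ℕ) (r : ℕ) : Finset (Fin n) :=
  Finset.univ.filter (fun j => r ≤ u j)

/-- Particles of the queue `Q` that are matched (paired) in `Par(Q, B)`. -/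
def matchedQ {n : ℕ} (Q B : Finset (Fin n)) : Finset (Fin n) :=
  Q \ unmatchedClose Q B

/-- The set of sites whose output label under `Q^{(ℓ)}(u)` is at least `r`
(cf. Remark 3.2): for `r ≤ ℓ` it is all of `Q` together with the particles of `u^{(r+1)}`
that collapse, and for `r > ℓ` it is the particles of `Q` matched in `Par(Q, u^{(r)})`
together with the particles of `u^{(r+1)}` that collapse. -/
def labelLevel {n : ℕ} (ℓ : ℕ) (Q : Finset (Fin n)) (u : Fin n → ℕ) (r : ℕ) :
    Finset (Fin n) :=
  (if r ≤ ℓ then Q else matchedQ Q (levelSet u r)) ∪ unmatchedOpen Q (levelSet u (r + 1))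

/-- The fermionic pairing operator `Q^{(ℓ)} : 𝒲 → 𝒲`: the output word, whose value at a
site is the label assigned there (the sum of the nested indicator vectors of the label
level sets). -/
def Qop {n : ℕ} (ℓ : ℕ) (Q : Finset (Fin n)) (u : Fin n → ℕ) : Fin n → ℕ :=
  fun j => ∑ r ∈ Finset.Icc 1 (ℓ + 1 + ∑ j', u j'), if j ∈ labelLevel ℓ Q u r then 1 else 0

/-- The first tensor factor of the combinatorial R matrix `ℛ(A ⊗ B)` on a pair of 0-1
rows (Nakayashiki–Yamada rule): the cylindrically unmatched particles of `Par(A, B)` are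
exchanged between the two rows; the first output factor (occupying the slot of `A`)
is `(A \ uA) ∪ uB`. -/
def Rfirst {n : ℕ} (A B : Finset (Fin n)) : Finset (Fin n) :=
  (A \ unmatchedClose A B) ∪ unmatchedOpen A B

section Helpers
variable {α : Type}

lemma pairProcess_append (ts1 ts2 : List (α × Bool)) :
    ∀ opens closes, pairProcess (ts1 ++ ts2) opens closes
      = pairProcess ts2 (pairProcess ts1 opens closes).1 (pairProcess ts1 opens closes).2 := by
  induction ts1 with
  | nil => intro opens closes; simp [pairProcess]
  | cons t ts ih =>
    intro opens closes
    obtain ⟨a, b⟩ := t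
    cases b with
    | true => simpa [pairProcess] using ih (a :: opens) closes
    | false =>
      cases opens with
      | nil => simpa [pairProcess] using ih [] (a :: closes)
      | cons o os => simpa [pairProcess] using ih os closes

lemma pairProcess_allFalse (ts : List (α × Bool)) (h : ∀ t ∈ ts, t.2 = false) :
    ∀ closes, pairProcess ts [] closes = ([], (ts.map Prod.fst).reverse ++ closes) := by
  induction ts with
  | nil => intro closes; simp [pairProcess]
  | cons t ts ih =>
    intro closes
    obtain ⟨a, b⟩ := t
    have hb : b = false := h (a, b) (by simp)
    subst hb
    have := ih (fun t ht => h t (by simp [ht])) (a :: closes)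
    simp [pairProcess, this]

end Helpers

section Helpers2
variable {n : ℕ}

/-- tokens of a single site -/
def siteTok (A B : Finset (Fin n)) (j : Fin n) : List (Fin n × Bool) :=
  (if j ∈ B then [(j, true)] else []) ++ (if j ∈ A then [(j, false)] else [])

lemma parTokens_eq (A B : Finset (Fin n)) :
    parTokens A B = (List.finRange n).flatMap (siteTok A B) := rfl

lemma opens_invariant (A B : Finset (Fin n)) (sites : List (Fin n)) :
    ∀ opens closes, (∀ x ∈ opens, x ∉ A) →
      ∀ x ∈ (pairProcess (sites.flatMap (siteTok A B)) opens closes).1, x ∉ A := by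
  induction sites with
  | nil => intro opens closes h x hx; exact h x hx
  | cons j sites ih =>
    intro opens closes h x hx
    rw [List.flatMap_cons, pairProcess_append] at hx
    by_cases hB : j ∈ B <;> by_cases hA : j ∈ A
    · -- open then close: stack unchanged
      simp only [siteTok, hA, hB, if_pos] at hx
      simp only [pairProcess, List.cons_append, List.nil_append] at hx
      exact ih opens closes h x hx
    · simp only [siteTok, hA, hB, if_pos, if_neg, List.append_nil] at hx
      simp only [pairProcess, List.cons_append, List.nil_append] at hx
      refine ih (j :: opens) closes ?_ x hx
      intro y hy
      rcases List.mem_cons.mp hy with rfl | hy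
      · exact hA
      · exact h y hy
    · simp only [siteTok, hA, hB, if_pos, if_neg, List.nil_append] at hx
      cases opens with
      | nil =>
        simp only [if_false, pairProcess, List.cons_append, List.nil_append, List.append_nil] at hx
        exact ih [] (j :: closes) (by simp) x hx
      | cons o os =>
        simp only [if_false, pairProcess, List.cons_append, List.nil_append, List.append_nil] at hx
        exact ih os closes (fun y hy => h y (List.mem_cons_of_mem o hy)) x hx
    · simp only [siteTok, hA, hB, if_neg, List.nil_append] at hx
      simp only [if_false, pairProcess, List.cons_append, List.nil_append, List.append_nil] at hx
      exact ih opens closes h x hx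

lemma unmatchedOpen_not_mem (A B : Finset (Fin n)) {x : Fin n} (hx : x ∈ unmatchedOpen A B) :
    x ∉ A := by
  have := List.mem_of_mem_drop (List.mem_toFinset.mp hx)
  exact opens_invariant A B (List.finRange n) [] [] (by simp) x this

end Helpers2

section Helpers3
variable {n : ℕ}

lemma parRes_empty (A : Finset (Fin n)) :
    parRes A (∅ : Finset (Fin n))
      = ([], ((parTokens A ∅).map Prod.fst).reverse) := by
  have h : ∀ t ∈ parTokens A (∅ : Finset (Fin n)), t.2 = false := by
    intro t ht
    simp only [parTokens, List.mem_flatMap] at ht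
    obtain ⟨j, -, hj⟩ := ht
    simp only [Finset.notMem_empty, if_false, List.nil_append] at hj
    by_cases hA : j ∈ A <;> simp [hA] at hj <;> simp [hj]
  simpa [parRes] using pairProcess_allFalse (parTokens A ∅) h []

lemma unmatchedOpen_empty (A : Finset (Fin n)) :
    unmatchedOpen A (∅ : Finset (Fin n)) = ∅ := by
  simp [unmatchedOpen, parRes_empty]

lemma mem_parTokens_fst (A : Finset (Fin n)) {x : Fin n}
    (hx : x ∈ A) : x ∈ ((parTokens A (∅ : Finset (Fin n))).map Prod.fst) := by
  simp only [List.mem_map, parTokens, List.mem_flatMap]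
  exact ⟨(x, false), ⟨x, by simp, by simp [hx]⟩, rfl⟩

lemma matchedQ_empty (A : Finset (Fin n)) :
    matchedQ A (∅ : Finset (Fin n)) = ∅ := by
  rw [matchedQ, Finset.sdiff_eq_empty_iff_subset]
  intro x hx
  simp only [unmatchedClose, parRes_empty]
  simp only [List.length_nil, Nat.sub_zero]
  rw [List.take_of_length_le (by simp), List.mem_toFinset, List.mem_reverse]
  exact mem_parTokens_fst A hx

lemma levelSet_empty_of_gt (u : Fin n → ℕ) (m r : ℕ) (hub : ∀ j, u j ≤ m) (hr : m < r) :
    levelSet u r = ∅ := by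
  rw [levelSet, Finset.filter_eq_empty_iff]
  intro j _
  have := hub j; omega

end Helpers3

/-- decomposition of the pairing operator via the combinatorial R matrix:
if all nonzero entries of `u` exceed `1`, `m` is the maximal entry of `u` (so the nested
decomposition is `u = u_1 + ⋯ + u_m` with `u_i = υ_i(u)`, `0 < u_m ≤ ⋯ ≤ u_2 = u_1`),
and `Q ⊆ [n]` has indicator vector `𝐐`, then
`Q^{(1)}(u) = 𝐐 + ∑_{i=2}^{m} (ℛ(𝐐 ⊗ u_i))_1`. -/
theorem pairing_operator_R_decomposition (n : ℕ) (Q : Finset (Fin n)) (u : Fin n → ℕ)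
    (m : ℕ) (hm0 : 0 < m) (h1 : ∀ j, u j ≠ 0 → 1 < u j)
    (hub : ∀ j, u j ≤ m) (hex : ∃ j, u j = m) :
    ∀ j, Qop 1 Q u j
      = (if j ∈ Q then 1 else 0)
        + ∑ i ∈ Finset.Icc 2 m, (if j ∈ Rfirst Q (levelSet u i) then 1 else 0) := by
  intro j
  obtain ⟨j0, hj0⟩ := hex
  have hm2 : 2 ≤ m := by have := h1 j0; omega
  have hmS : m ≤ ∑ j', u j' := by
    calc m = u j0 := hj0.symm
    _ ≤ ∑ j', u j' := Finset.single_le_sum (fun _ _ => Nat.zero_le _) (Finset.mem_univ j0)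
  set g : ℕ → ℕ := fun r => if j ∈ unmatchedOpen Q (levelSet u r) then 1 else 0 with hg
  set hM : ℕ → ℕ := fun r => if j ∈ matchedQ Q (levelSet u r) then 1 else 0 with hh
  have hsplit : ∀ (A B : Finset (Fin n)), (∀ x ∈ B, x ∉ A) →
      (if j ∈ A ∪ B then (1:ℕ) else 0) = (if j ∈ A then 1 else 0) + (if j ∈ B then 1 else 0) := by
    intro A B hd
    by_cases hA : j ∈ A
    · have hB : j ∉ B := fun hB => hd j hB hA
      simp [Finset.mem_union, hA, hB]
    · by_cases hB : j ∈ B <;> simp [Finset.mem_union, hA, hB]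
  have hO : ∀ r, ∀ x ∈ unmatchedOpen Q (levelSet u r), x ∉ Q :=
    fun r x hx => unmatchedOpen_not_mem _ _ hx
  have hglast : g (m + 1) = 0 := by
    simp [hg, levelSet_empty_of_gt u m (m + 1) hub (by omega), unmatchedOpen_empty]
  have hF1 : (if j ∈ labelLevel 1 Q u 1 then (1:ℕ) else 0)
      = (if j ∈ Q then 1 else 0) + g 2 := by
    rw [show labelLevel 1 Q u 1 = Q ∪ unmatchedOpen Q (levelSet u 2) from by
      simp [labelLevel]]
    exact hsplit Q _ (hO 2)
  have hFr : ∀ r ∈ Finset.Icc 2 m,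
      (if j ∈ labelLevel 1 Q u r then (1:ℕ) else 0) = hM r + g (r + 1) := by
    intro r hr
    simp only [Finset.mem_Icc] at hr
    rw [show labelLevel 1 Q u r
        = matchedQ Q (levelSet u r) ∪ unmatchedOpen Q (levelSet u (r + 1)) from by
      rw [labelLevel, if_neg (by omega)]]
    exact hsplit _ _ (fun x hx hxm => (hO (r + 1) x hx) (Finset.mem_sdiff.mp hxm).1)
  have hRr : ∀ r ∈ Finset.Icc 2 m,
      (if j ∈ Rfirst Q (levelSet u r) then (1:ℕ) else 0) = hM r + g r := by
    intro r _
    rw [show Rfirst Q (levelSet u r)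
        = matchedQ Q (levelSet u r) ∪ unmatchedOpen Q (levelSet u r) from rfl]
    exact hsplit _ _ (fun x hx hxm => (hO r x hx) (Finset.mem_sdiff.mp hxm).1)
  have hFz : ∀ r, m < r → (if j ∈ labelLevel 1 Q u r then (1:ℕ) else 0) = 0 := by
    intro r hr
    rw [labelLevel, if_neg (show ¬ r ≤ 1 by omega), levelSet_empty_of_gt u m r hub hr,
      levelSet_empty_of_gt u m (r + 1) hub (by omega), matchedQ_empty, unmatchedOpen_empty]
    simp
  simp only [Qop]
  have hsub : Finset.Icc 1 m ⊆ Finset.Icc 1 (1 + 1 + ∑ j', u j') :=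
    Finset.Icc_subset_Icc_right (by omega)
  rw [← Finset.sum_subset hsub (fun r hrt hrs => by
    simp only [Finset.mem_Icc] at hrt hrs
    exact hFz r (by omega))]
  have hins : Finset.Icc 1 m = insert 1 (Finset.Icc 2 m) := by
    ext r; simp only [Finset.mem_Icc, Finset.mem_insert]; omega
  rw [hins, Finset.sum_insert (by simp)]
  rw [hF1, Finset.sum_congr rfl hFr, Finset.sum_congr rfl hRr,
    Finset.sum_add_distrib, Finset.sum_add_distrib]
  have key : g 2 + ∑ r ∈ Finset.Icc 2 m, g (r + 1) = ∑ r ∈ Finset.Icc 2 m, g r := by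
    have h1' : ∑ r ∈ Finset.Icc 2 m, g (r + 1) = ∑ r ∈ Finset.Icc 3 (m + 1), g r := by
      rw [show Finset.Icc 3 (m + 1) = Finset.map (addRightEmbedding 1) (Finset.Icc 2 m) from by
        rw [Finset.map_add_right_Icc], Finset.sum_map]
      rfl
    have h2' : Finset.Icc 2 (m + 1) = insert 2 (Finset.Icc 3 (m + 1)) := by
      ext r; simp only [Finset.mem_Icc, Finset.mem_insert]; omega
    have h3' : ∑ r ∈ Finset.Icc 2 (m + 1), g r = ∑ r ∈ Finset.Icc 2 m, g r + g (m + 1) :=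
      Finset.sum_Icc_succ_top (by omega) g
    rw [h1', ← Finset.sum_insert (show (2:ℕ) ∉ Finset.Icc 3 (m + 1) by simp), ← h2', h3',
      hglast]
    omega
  omega
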